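/- arXiv:1510.06122 — 6 statements merged into one kernel-verified Lean document; each statement's English description precedes it below -/
import Mathlib

section
/- Let f, g ∈ ℂ[z] be polynomials, α ∈ ℂ, and r > 0. Suppose that (a) f(z) ≠ α for all z with |z| = r; (b) |g(z) − f(z)| < |f(z) − α| for all z with |z| = r; and (c) for every y with |y| < r and f(y) = α, the polynomial g − f vanishes at y to order at least the multiplicity of y as a root of f − α. Then {z : |z| < r and g(z) = α} = {z : |z| < r and f(z) = α}. -/
open Polynomial Metric

/-- A Rouché-type statement for polynomials. If `f(z) ≠ α` on `|z| = r`,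
`|g(z) - f(z)| < |f(z) - α|` on `|z| = r`, and `g - f` vanishes at every root `y` of
`f - α` in `|y| < r` to order at least the multiplicity of `y`, then `f` and `g` have the
same `α`-points in the open disc of radius `r`. -/
theorem rouche_same_preimages (f g : Polynomial ℂ) (α : ℂ) (r : ℝ) (hr : 0 < r)
    (ha : ∀ z : ℂ, ‖z‖ = r → f.eval z ≠ α)
    (hb : ∀ z : ℂ, ‖z‖ = r →
      ‖g.eval z - f.eval z‖ < ‖f.eval z - α‖)
    (hc : ∀ y : ℂ, ‖y‖ < r → f.eval y = α →
      (Polynomial.X - Polynomial.C y) ^ ((f - Polynomial.C α).rootMultiplicity y) ∣ (g - f)) :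
    {z : ℂ | ‖z‖ < r ∧ g.eval z = α} =
      {z : ℂ | ‖z‖ < r ∧ f.eval z = α} := by
  set F := f - Polynomial.C α with hFdef
  set G := g - Polynomial.C α with hGdef
  have habs_r : ‖(r : ℂ)‖ = r := by
    simp [abs_of_pos hr]
  have hFcirc : ∀ z : ℂ, ‖z‖ = r → F.eval z ≠ 0 := by
    intro z hz h
    exact ha z hz (by simpa [hFdef, sub_eq_zero] using h)
  have hFne : F ≠ 0 := by
    intro h
    exact hFcirc (r : ℂ) habs_r (by simp [h])
  set m : ℂ → ℕ := fun y => F.rootMultiplicity y with hm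
  set S : Finset ℂ := F.roots.toFinset.filter (fun y => ‖y‖ < r) with hS
  have hSroot : ∀ y ∈ S, F.eval y = 0 ∧ ‖y‖ < r := by
    intro y hy
    rw [hS, Finset.mem_filter, Multiset.mem_toFinset, mem_roots hFne] at hy
    exact ⟨hy.1, hy.2⟩
  set P : Polynomial ℂ := ∏ y ∈ S, (X - Polynomial.C y) ^ (m y) with hP
  have hcop : Set.Pairwise ↑S (Function.onFun (IsCoprime (R := Polynomial ℂ)) fun y => (X - Polynomial.C y) ^ m y) := by
    intro a _ b _ hab
    exact (Polynomial.isCoprime_X_sub_C_of_isUnit_sub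
      (isUnit_iff_ne_zero.2 (sub_ne_zero.2 hab))).pow
  have hPF : P ∣ F :=
    Finset.prod_dvd_of_coprime hcop (fun y _ => Polynomial.pow_rootMultiplicity_dvd F y)
  have hgf : g - f = G - F := by ring
  have hPG : P ∣ G := by
    refine Finset.prod_dvd_of_coprime hcop (fun y hy => ?_)
    obtain ⟨hy0, hyr⟩ := hSroot y hy
    have hfy : f.eval y = α := by
      have := hy0; simpa [hFdef, sub_eq_zero] using this
    have h1 : (X - Polynomial.C y) ^ (m y) ∣ (g - f) := hc y hyr hfy
    have h2 : (X - Polynomial.C y) ^ (m y) ∣ F := Polynomial.pow_rootMultiplicity_dvd F y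
    have : G = F + (g - f) := by rw [hgf]; ring
    rw [this]
    exact dvd_add h2 h1
  obtain ⟨F₁, hF₁⟩ := hPF
  obtain ⟨G₁, hG₁⟩ := hPG
  have hF₁ne : F₁ ≠ 0 := by
    intro h; exact hFne (by rw [hF₁, h, mul_zero])
  -- P and F₁ nonzero on the circle
  have hcirc : ∀ z : ℂ, ‖z‖ = r → P.eval z ≠ 0 ∧ F₁.eval z ≠ 0 := by
    intro z hz
    have := hFcirc z hz
    rw [hF₁, Polynomial.eval_mul] at this
    exact ⟨left_ne_zero_of_mul this, right_ne_zero_of_mul this⟩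
  -- F₁ nonzero on the open ball
  have hF₁ball : ∀ w : ℂ, ‖w‖ < r → F₁.eval w ≠ 0 := by
    intro w hw hw0
    have hFw : F.eval w = 0 := by rw [hF₁, Polynomial.eval_mul, hw0, mul_zero]
    have hwS : w ∈ S := by
      rw [hS, Finset.mem_filter, Multiset.mem_toFinset, mem_roots hFne]
      exact ⟨hFw, hw⟩
    have h1 : (X - Polynomial.C w) ^ (m w) ∣ P := Finset.dvd_prod_of_mem _ hwS
    have h2 : (X - Polynomial.C w) ∣ F₁ := Polynomial.dvd_iff_isRoot.2 hw0
    have h3 : (X - Polynomial.C w) ^ (m w + 1) ∣ F := by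
      rw [hF₁, pow_succ]
      exact mul_dvd_mul h1 h2
    exact Polynomial.pow_rootMultiplicity_not_dvd hFne w h3
  -- F₁ nonzero on the closed ball
  have hF₁cball : ∀ w : ℂ, ‖w‖ ≤ r → F₁.eval w ≠ 0 := by
    intro w hw
    rcases lt_or_eq_of_le hw with h | h
    · exact hF₁ball w h
    · exact (hcirc w h).2
  -- the quotient function
  set u : ℂ → ℂ := fun z => (G₁.eval z - F₁.eval z) / F₁.eval z with hu
  have hucirc : ∀ z : ℂ, ‖z‖ = r → ‖u z‖ < 1 := by
    intro z hz
    have hb' := hb z hz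
    have hPz := (hcirc z hz).1
    have hF₁z := (hcirc z hz).2
    have key : g.eval z - f.eval z = P.eval z * (G₁.eval z - F₁.eval z) := by
      have : g - f = P * G₁ - P * F₁ := by rw [← hG₁, ← hF₁, hgf]
      calc g.eval z - f.eval z = (g - f).eval z := by simp
        _ = P.eval z * (G₁.eval z - F₁.eval z) := by rw [this]; simp; ring
    have key2 : f.eval z - α = P.eval z * F₁.eval z := by
      have : F.eval z = P.eval z * F₁.eval z := by rw [hF₁]; simp
      simpa [hFdef] using this
    rw [key, key2, norm_mul, norm_mul] at hb'
    have hPpos : 0 < ‖P.eval z‖ := by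
      simpa [AbsoluteValue.pos_iff] using hPz
    have hlt : ‖G₁.eval z - F₁.eval z‖ < ‖F₁.eval z‖ :=
      lt_of_mul_lt_mul_left hb' hPpos.le
    rw [hu]
    simp only [norm_div]
    rw [div_lt_one (by simpa [AbsoluteValue.pos_iff] using hF₁z)]
    exact hlt
  -- maximum modulus
  have hG₁ball : ∀ w : ℂ, ‖w‖ < r → G₁.eval w ≠ 0 := by
    intro w hw hw0
    -- max of u on sphere
    have hsne : (sphere (0:ℂ) r).Nonempty := by
      exact NormedSpace.sphere_nonempty.2 hr.le
    have hcont : ContinuousOn u (sphere (0:ℂ) r) := by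
      apply ContinuousOn.div
      · exact ((G₁.continuous).sub (F₁.continuous)).continuousOn
      · exact (F₁.continuous).continuousOn
      · intro z hz
        exact (hcirc z (by simpa [mem_sphere_iff_norm] using hz)).2
    obtain ⟨zM, hzM, hmax⟩ := (isCompact_sphere (0:ℂ) r).exists_isMaxOn hsne
      (hcont.norm)
    have hzMr : ‖zM‖ = r := by
      simpa [mem_sphere_iff_norm] using hzM
    have hC : ‖u zM‖ < 1 := by
      exact hucirc zM hzMr
    have hdiff : DiffContOnCl ℂ u (ball (0:ℂ) r) := by
      apply DifferentiableOn.diffContOnCl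
      rw [closure_ball (0:ℂ) hr.ne']
      apply DifferentiableOn.div
      · exact ((G₁.differentiable).sub (F₁.differentiable)).differentiableOn
      · exact (F₁.differentiable).differentiableOn
      · intro z hz
        exact hF₁cball z (by simpa [mem_closedBall_iff_norm] using hz)
    have hle : ∀ z ∈ frontier (ball (0:ℂ) r), ‖u z‖ ≤ ‖u zM‖ := by
      rw [frontier_ball (0:ℂ) hr.ne']
      intro z hz
      exact hmax hz
    have hwball : w ∈ closure (ball (0:ℂ) r) := by
      rw [closure_ball (0:ℂ) hr.ne']
      simpa [mem_closedBall_iff_norm] using hw.le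
    have := Complex.norm_le_of_forall_mem_frontier_norm_le isBounded_ball hdiff hle hwball
    have huw : u w = -1 := by
      rw [hu]
      simp only [hw0, zero_sub]
      rw [neg_div, div_self (hF₁ball w hw)]
    rw [huw] at this
    simp only [norm_neg, norm_one] at this
    exact absurd this (not_le.2 hC)
  -- conclusion
  ext z
  simp only [Set.mem_setOf_eq]
  constructor
  · rintro ⟨hz, hgz⟩
    refine ⟨hz, ?_⟩
    have hGz : G.eval z = 0 := by simp [hGdef, hgz]
    rw [hG₁, Polynomial.eval_mul] at hGz
    rcases mul_eq_zero.1 hGz with h | h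
    · -- P.eval z = 0, so z is a root of F in the disc
      rw [hP, Polynomial.eval_prod] at h
      obtain ⟨y, hy, hy0⟩ := Finset.prod_eq_zero_iff.1 h
      have : z = y := by
        simp only [Polynomial.eval_pow, Polynomial.eval_sub, Polynomial.eval_X,
          Polynomial.eval_C, pow_eq_zero_iff'] at hy0
        exact sub_eq_zero.1 hy0.1
      subst this
      have := (hSroot z hy).1
      simpa [hFdef, sub_eq_zero] using this
    · exact absurd h (hG₁ball z hz)
  · rintro ⟨hz, hfz⟩
    refine ⟨hz, ?_⟩
    have hmz : 0 < m z := by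
      rw [hm]
      refine (Polynomial.rootMultiplicity_pos hFne).2 ?_
      simp [Polynomial.IsRoot, hFdef, hfz]
    obtain ⟨q, hq⟩ := hc z hz hfz
    have : (g - f).eval z = 0 := by
      rw [hq]
      rw [eval_mul, eval_pow, eval_sub, eval_X, eval_C, sub_self,
        zero_pow (show rootMultiplicity z F ≠ 0 from hmz.ne'), zero_mul]
    have : g.eval z - f.eval z = 0 := by simpa using this
    rw [sub_eq_zero] at this
    rw [this, hfz]
end

section
/- There exists an enumeration (α_n)_{n≥1} of Q̄, i.e. a bijection n ↦ α_n from the positive integers onto the set of algebraic numbers in ℂ, such that α_1 = 0 and for every n ≥ 1: α_{3n−1} and α_{3n} are non-real with α_{3n} equal to the complex conjugate of α_{3n−1}, α_{3n+1} is real, and |α_{3n+i}| < n for each i ∈ {−1, 0, 1}. -/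
open Set Polynomial Complex

attribute [local instance] Classical.propDecidable

private noncomputable def enumF (e : ℕ → ℂ) (T : ℕ → Set ℂ)
    (key : ∀ (n : ℕ) (s : Finset ℕ), ∃ k, k ∉ s ∧ e k ∈ T n) : ℕ → Finset ℕ
  | 0 => ∅
  | n + 1 => insert (Nat.find (key n (enumF e T key n))) (enumF e T key n)

private noncomputable def enumC (e : ℕ → ℂ) (T : ℕ → Set ℂ)
    (key : ∀ (n : ℕ) (s : Finset ℕ), ∃ k, k ∉ s ∧ e k ∈ T n) (n : ℕ) : ℕ :=
  Nat.find (key n (enumF e T key n))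

private lemma exists_enum {T : ℕ → Set ℂ} (mono : Monotone T)
    (hinf : ∀ n, (T n).Infinite) (hcnt : (⋃ n, T n).Countable) :
    ∃ f : ℕ → ℂ, Function.Injective f ∧ Set.range f = (⋃ n, T n) ∧ ∀ n, f n ∈ T n := by
  have hUinf : (⋃ n, T n).Infinite := (hinf 0).mono (Set.subset_iUnion T 0)
  obtain ⟨d⟩ : Nonempty (Denumerable (⋃ n, T n)) :=
    Set.countable_infinite_iff_nonempty_denumerable.mp ⟨hcnt, hUinf⟩
  let e0 : ℕ ≃ (⋃ n, T n) := (Denumerable.eqv _).symm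
  have einj : Function.Injective (fun n => ((e0 n : ℂ))) :=
    fun a b h => e0.injective (Subtype.ext h)
  have erange : Set.range (fun n => ((e0 n : ℂ))) = ⋃ n, T n := by
    ext x
    constructor
    · rintro ⟨k, rfl⟩; exact (e0 k).2
    · intro hx; exact ⟨e0.symm ⟨x, hx⟩, by simp⟩
  set e : ℕ → ℂ := fun n => ((e0 n : ℂ)) with he
  have key : ∀ (n : ℕ) (s : Finset ℕ), ∃ k, k ∉ s ∧ e k ∈ T n := by
    intro n s
    have hP : {k | e k ∈ T n}.Infinite := by
      by_contra hfin
      rw [Set.not_infinite] at hfin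
      have hsub : T n ⊆ e '' {k | e k ∈ T n} := by
        intro x hx
        have hx2 : x ∈ Set.range e := erange ▸ Set.mem_iUnion.2 ⟨n, hx⟩
        obtain ⟨k, rfl⟩ := hx2
        exact ⟨k, hx, rfl⟩
      exact hinf n ((hfin.image e).subset hsub)
    obtain ⟨k, hk⟩ := (hP.diff s.finite_toSet).nonempty
    exact ⟨k, hk.2, hk.1⟩
  set F : ℕ → Finset ℕ := enumF e T key with hF
  set c : ℕ → ℕ := enumC e T key with hc
  have hFsucc : ∀ n, F (n + 1) = insert (c n) (F n) := fun n => rfl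
  have hspec : ∀ n, c n ∉ F n ∧ e (c n) ∈ T n := fun n => Nat.find_spec (key n (F n))
  have hmem : ∀ m n, m < n → c m ∈ F n := by
    intro m n
    induction n with
    | zero => omega
    | succ n ih =>
      intro h
      rw [hFsucc]
      rcases Nat.lt_succ_iff_lt_or_eq.mp h with h | h
      · exact Finset.mem_insert_of_mem (ih h)
      · subst h; exact Finset.mem_insert_self _ _
  have cne : ∀ a b, a < b → c a ≠ c b := by
    intro a b h heq
    exact (hspec b).1 (heq ▸ hmem a b h)
  have cinj : Function.Injective c := by
    intro a b hab
    rcases lt_trichotomy a b with h | h | h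
    · exact absurd hab (cne a b h)
    · exact h
    · exact absurd hab.symm (cne b a h)
  have hFmem : ∀ n x, x ∈ F n → ∃ m, m < n ∧ c m = x := by
    intro n
    induction n with
    | zero => intro x hx; exact absurd hx (by rw [hF]; exact Finset.notMem_empty x)
    | succ n ih =>
      intro x hx
      rw [hFsucc] at hx
      rcases Finset.mem_insert.1 hx with h | h
      · exact ⟨n, Nat.lt_succ_self n, h.symm⟩
      · obtain ⟨m, hm, hcm⟩ := ih x h
        exact ⟨m, hm.trans (Nat.lt_succ_self n), hcm⟩
  refine ⟨fun n => e (c n), einj.comp cinj, ?_, fun n => (hspec n).2⟩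
  apply Set.Subset.antisymm
  · rintro x ⟨n, rfl⟩; exact Set.mem_iUnion.2 ⟨n, (hspec n).2⟩
  · intro x hx
    obtain ⟨k, rfl⟩ : x ∈ Set.range e := erange ▸ hx
    obtain ⟨N, hN⟩ := Set.mem_iUnion.1 hx
    by_contra hnot
    simp only [Set.mem_range, not_exists] at hnot
    have hck : ∀ n, c n ≠ k := fun n h => hnot n (by rw [h])
    have hle : ∀ n, N ≤ n → c n ≤ k := by
      intro n hn
      have hknF : k ∉ F n := by
        intro h
        obtain ⟨m, _, hm⟩ := hFmem n k h
        exact hck m hm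
      exact Nat.find_le ⟨hknF, mono hn hN⟩
    have hinj2 : Function.Injective (fun i => c (N + i)) := by
      intro a b h
      have := cinj h
      omega
    have hsub : (Finset.range (k + 2)).image (fun i => c (N + i)) ⊆ Finset.range (k + 1) := by
      intro x hx2
      simp only [Finset.mem_image, Finset.mem_range] at hx2 ⊢
      obtain ⟨i, _, rfl⟩ := hx2
      have := hle (N + i) (Nat.le_add_right _ _)
      omega
    have h1 : ((Finset.range (k + 2)).image (fun i => c (N + i))).card = k + 2 := by
      rw [Finset.card_image_of_injective _ hinj2, Finset.card_range]
    have h2 := Finset.card_le_card hsub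
    rw [h1, Finset.card_range] at h2
    omega

private lemma isAlg_conj {z : ℂ} (h : IsAlgebraic ℚ z) :
    IsAlgebraic ℚ ((starRingEnd ℂ) z) := by
  obtain ⟨p, hp0, hp⟩ := h
  refine ⟨p, hp0, ?_⟩
  have h2 := Polynomial.aeval_algHom_apply ((starRingEnd ℂ).toRatAlgHom) z p
  simpa [hp] using h2

private lemma isAlg_I : IsAlgebraic ℚ (Complex.I) :=
  ⟨X ^ 2 + C 1, X_pow_add_C_ne_zero (by norm_num) 1, by simp [Complex.I_sq]⟩

private lemma ratCast_abs_lt_one (m : ℕ) :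
    ‖((((m : ℚ) + 2)⁻¹ : ℚ) : ℂ)‖ < 1 := by
  rw [← Complex.ofReal_ratCast, Complex.norm_real, Real.norm_eq_abs]
  push_cast
  rw [abs_of_pos (by positivity)]
  have h2 : (1 : ℝ) < (m : ℝ) + 2 := by
    have := Nat.cast_nonneg (α := ℝ) m
    linarith
  exact inv_lt_one_of_one_lt₀ h2

private lemma ratCast_inj_aux : Function.Injective
    (fun m : ℕ => (((((m : ℚ) + 2)⁻¹ : ℚ)) : ℂ)) := by
  intro a b h
  simp only [] at h
  have h' : ((((a : ℚ) + 2)⁻¹ : ℚ)) = ((((b : ℚ) + 2)⁻¹ : ℚ)) := by exact_mod_cast h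
  rw [inv_inj] at h'
  have : (a : ℚ) = b := by linarith
  exact_mod_cast this

/-- There is an enumeration `(α n)` (a bijection from `{n : ℕ | 1 ≤ n}` onto
the set of algebraic numbers in `ℂ`) with `α 1 = 0` and such that for every `n ≥ 1`:
`α (3n-1)` and `α (3n)` are non-real with `α (3n)` the conjugate of `α (3n-1)`,
`α (3n+1)` is real, and `|α (3n+i)| < n` for `i ∈ {-1, 0, 1}`. -/
theorem exists_enumeration_of_algebraics :
    ∃ α : ℕ → ℂ,
      Set.BijOn α {n : ℕ | 1 ≤ n} {z : ℂ | IsAlgebraic ℚ z} ∧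
      α 1 = 0 ∧
      ∀ n : ℕ, 1 ≤ n →
        (α (3 * n - 1)).im ≠ 0 ∧
        (α (3 * n)).im ≠ 0 ∧
        α (3 * n) = starRingEnd ℂ (α (3 * n - 1)) ∧
        (α (3 * n + 1)).im = 0 ∧
        ‖α (3 * n - 1)‖ < n ∧
        ‖α (3 * n)‖ < n ∧
        ‖α (3 * n + 1)‖ < n := by
  -- the two families of sets
  set Tr : ℕ → Set ℂ := fun n =>
    {x : ℂ | IsAlgebraic ℚ x ∧ x.im = 0 ∧ ‖x‖ < ((max n 1 : ℕ) : ℝ)} with hTr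
  set Tu : ℕ → Set ℂ := fun n =>
    {z : ℂ | IsAlgebraic ℚ z ∧ 0 < z.im ∧ ‖z‖ < (n : ℝ) + 1} with hTu
  have hTrMem : ∀ n x, x ∈ Tr n ↔
      (IsAlgebraic ℚ x ∧ x.im = 0 ∧ ‖x‖ < ((max n 1 : ℕ) : ℝ)) := by
    intro n x; rw [hTr]; rfl
  have hTuMem : ∀ n z, z ∈ Tu n ↔
      (IsAlgebraic ℚ z ∧ 0 < z.im ∧ ‖z‖ < (n : ℝ) + 1) := by
    intro n z; rw [hTu]; rfl
  have monoTr : Monotone Tr := by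
    intro a b hab x hx
    rw [hTrMem] at hx ⊢
    refine ⟨hx.1, hx.2.1, hx.2.2.trans_le ?_⟩
    exact_mod_cast max_le_max hab le_rfl
  have monoTu : Monotone Tu := by
    intro a b hab x hx
    rw [hTuMem] at hx ⊢
    refine ⟨hx.1, hx.2.1, hx.2.2.trans_le ?_⟩
    have : (a : ℝ) ≤ (b : ℝ) := by exact_mod_cast hab
    linarith
  have infTr : ∀ n, (Tr n).Infinite := by
    intro n
    refine Set.infinite_of_injective_forall_mem
      (f := fun m : ℕ => (((((m : ℚ) + 2)⁻¹ : ℚ)) : ℂ)) ratCast_inj_aux ?_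
    intro m
    rw [hTrMem]
    refine ⟨isAlgebraic_rat ℚ _, Complex.ratCast_im _, ?_⟩
    have hb : (1 : ℝ) ≤ ((max n 1 : ℕ) : ℝ) := by exact_mod_cast le_max_right n 1
    exact lt_of_lt_of_le (ratCast_abs_lt_one m) hb
  have infTu : ∀ n, (Tu n).Infinite := by
    intro n
    refine Set.infinite_of_injective_forall_mem
      (f := fun m : ℕ => (((((m : ℚ) + 2)⁻¹ : ℚ)) : ℂ) * Complex.I) ?_ ?_
    · intro a b h
      simp only [] at h
      have h2 : ((((((a : ℚ) + 2)⁻¹ : ℚ)) : ℂ) * Complex.I).im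
          = ((((((b : ℚ) + 2)⁻¹ : ℚ)) : ℂ) * Complex.I).im := by rw [h]
      rw [Complex.mul_I_im, Complex.mul_I_im, Complex.ratCast_re, Complex.ratCast_re] at h2
      apply ratCast_inj_aux
      simp only []
      exact_mod_cast congrArg (fun q : ℝ => (q : ℂ)) h2
    · intro m
      rw [hTuMem]
      refine ⟨?_, ?_, ?_⟩
      · exact isAlgebraic_iff_isIntegral.mpr
          ((isAlgebraic_iff_isIntegral.mp (isAlgebraic_rat ℚ _)).mul
            (isAlgebraic_iff_isIntegral.mp isAlg_I))
      · rw [Complex.mul_I_im, Complex.ratCast_re]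
        have hq : (0 : ℚ) < ((m : ℚ) + 2)⁻¹ := by positivity
        exact_mod_cast hq
      · rw [norm_mul, Complex.norm_I, mul_one]
        have hb : (1 : ℝ) ≤ (n : ℝ) + 1 := by
          have := Nat.cast_nonneg (α := ℝ) n
          linarith
        exact lt_of_lt_of_le (ratCast_abs_lt_one m) hb
  have cntTr : (⋃ n, Tr n).Countable :=
    (Algebraic.countable ℚ ℂ).mono (Set.iUnion_subset fun n x hx => ((hTrMem n x).1 hx).1)
  have cntTu : (⋃ n, Tu n).Countable :=
    (Algebraic.countable ℚ ℂ).mono (Set.iUnion_subset fun n x hx => ((hTuMem n x).1 hx).1)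
  have hTrU : (⋃ n, Tr n) = {x : ℂ | IsAlgebraic ℚ x ∧ x.im = 0} := by
    ext x
    simp only [Set.mem_iUnion, Set.mem_setOf_eq, hTrMem]
    constructor
    · rintro ⟨n, h1, h2, _⟩; exact ⟨h1, h2⟩
    · rintro ⟨h1, h2⟩
      obtain ⟨n, hn⟩ := exists_nat_gt ‖x‖
      refine ⟨n, h1, h2, hn.trans_le ?_⟩
      exact_mod_cast le_max_left n 1
  have hTuU : (⋃ n, Tu n) = {z : ℂ | IsAlgebraic ℚ z ∧ 0 < z.im} := by
    ext z
    simp only [Set.mem_iUnion, Set.mem_setOf_eq, hTuMem]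
    constructor
    · rintro ⟨n, h1, h2, _⟩; exact ⟨h1, h2⟩
    · rintro ⟨h1, h2⟩
      obtain ⟨n, hn⟩ := exists_nat_gt ‖z‖
      exact ⟨n, h1, h2, by linarith⟩
  obtain ⟨ρ, ρinj, ρrange, ρmem⟩ := exists_enum monoTr infTr cntTr
  obtain ⟨ζ, ζinj, ζrange, ζmem⟩ := exists_enum monoTu infTu cntTu
  rw [hTrU] at ρrange
  rw [hTuU] at ζrange
  have ζmem' : ∀ k, IsAlgebraic ℚ (ζ k) ∧ 0 < (ζ k).im ∧ ‖ζ k‖ < (k : ℝ) + 1 :=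
    fun k => (hTuMem k (ζ k)).1 (ζmem k)
  -- put 0 at position 0 of the real enumeration
  obtain ⟨m0, hm0⟩ : (0 : ℂ) ∈ Set.range ρ := by
    rw [ρrange]; exact ⟨isAlgebraic_zero, rfl⟩
  set σ : Equiv.Perm ℕ := Equiv.swap 0 m0 with hσ
  set ρ' : ℕ → ℂ := fun n => ρ (σ n) with hρ'
  have ρ'inj : Function.Injective ρ' := ρinj.comp σ.injective
  have ρ'range : Set.range ρ' = {x : ℂ | IsAlgebraic ℚ x ∧ x.im = 0} := by
    rw [hρ', show (fun n => ρ (σ n)) = ρ ∘ σ from rfl,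
      Function.Surjective.range_comp σ.surjective ρ, ρrange]
  have ρ'0 : ρ' 0 = 0 := by rw [hρ', hσ]; simp only [Equiv.swap_apply_left]; exact hm0
  have ρ'mem : ∀ n, IsAlgebraic ℚ (ρ' n) ∧ (ρ' n).im = 0 := by
    intro n
    have h : ρ' n ∈ Set.range ρ' := ⟨n, rfl⟩
    rw [ρ'range] at h
    exact h
  have ρ'abs : ∀ n, 1 ≤ n → ‖ρ' n‖ < (n : ℝ) := by
    intro n hn
    rcases eq_or_ne n m0 with rfl | hne
    · have hs : σ n = 0 := by rw [hσ]; exact Equiv.swap_apply_right 0 n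
      have h0 := ((hTrMem 0 (ρ 0)).1 (ρmem 0)).2.2
      simp only [hρ']
      rw [hs]
      refine h0.trans_le ?_
      have : ((max 0 1 : ℕ) : ℝ) = 1 := by norm_num
      rw [this]
      exact_mod_cast hn
    · have hs : σ n = n := by
        rw [hσ]; exact Equiv.swap_apply_of_ne_of_ne (by omega) hne
      have h0 := ((hTrMem n (ρ n)).1 (ρmem n)).2.2
      simp only [hρ']
      rw [hs]
      refine h0.trans_le ?_
      have : max n 1 = n := max_eq_left hn
      rw [this]
  -- the enumeration
  set α : ℕ → ℂ := fun j => if j % 3 = 1 then ρ' (j / 3)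
    else if j % 3 = 2 then ζ (j / 3)
    else (starRingEnd ℂ) (ζ (j / 3 - 1)) with hα
  have hv1 : ∀ k, α (3 * k + 1) = ρ' k := by
    intro k
    rw [hα]
    simp only []
    rw [if_pos (by omega)]
    congr 1
    omega
  have hv2 : ∀ k, α (3 * k + 2) = ζ k := by
    intro k
    rw [hα]
    simp only []
    rw [if_neg (by omega), if_pos (by omega)]
    congr 1
    omega
  have hv0 : ∀ k, α (3 * k + 3) = (starRingEnd ℂ) (ζ k) := by
    intro k
    rw [hα]
    simp only []
    rw [if_neg (by omega), if_neg (by omega),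
      show (3 * k + 3) / 3 - 1 = k from by omega]
  have hsplit : ∀ j : ℕ, 1 ≤ j →
      (∃ k, j = 3 * k + 1) ∨ (∃ k, j = 3 * k + 2) ∨ (∃ k, j = 3 * k + 3) := by
    intro j hj
    rcases (show j % 3 = 0 ∨ j % 3 = 1 ∨ j % 3 = 2 by omega) with h | h | h
    · exact Or.inr (Or.inr ⟨j / 3 - 1, by omega⟩)
    · exact Or.inl ⟨j / 3, by omega⟩
    · exact Or.inr (Or.inl ⟨j / 3, by omega⟩)
  refine ⟨α, ⟨?_, ?_, ?_⟩, ?_, ?_⟩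
  · -- MapsTo
    intro j hj
    simp only [Set.mem_setOf_eq] at hj ⊢
    rcases hsplit j hj with ⟨k, rfl⟩ | ⟨k, rfl⟩ | ⟨k, rfl⟩
    · rw [hv1]; exact (ρ'mem k).1
    · rw [hv2]; exact (ζmem' k).1
    · rw [hv0]; exact isAlg_conj (ζmem' k).1
  · -- InjOn
    intro a ha b hb heq
    simp only [Set.mem_setOf_eq] at ha hb
    have him0 : ∀ k, ((starRingEnd ℂ) (ζ k)).im < 0 := by
      intro k
      rw [Complex.conj_im]
      linarith [(ζmem' k).2.1]
    rcases hsplit a ha with ⟨k, rfl⟩ | ⟨k, rfl⟩ | ⟨k, rfl⟩ <;>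
      rcases hsplit b hb with ⟨l, rfl⟩ | ⟨l, rfl⟩ | ⟨l, rfl⟩
    · rw [hv1, hv1] at heq; have := ρ'inj heq; omega
    · rw [hv1, hv2] at heq
      have h1 := (ρ'mem k).2
      have h2 := (ζmem' l).2.1
      rw [← heq, h1] at h2
      exact absurd h2 (lt_irrefl 0)
    · rw [hv1, hv0] at heq
      have h1 := (ρ'mem k).2
      have h2 := him0 l
      rw [← heq, h1] at h2
      exact absurd h2 (lt_irrefl 0)
    · rw [hv2, hv1] at heq
      have h1 := (ρ'mem l).2
      have h2 := (ζmem' k).2.1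
      rw [heq, h1] at h2
      exact absurd h2 (lt_irrefl 0)
    · rw [hv2, hv2] at heq; have := ζinj heq; omega
    · rw [hv2, hv0] at heq
      have h2 := (ζmem' k).2.1
      have h3 := him0 l
      rw [← heq] at h3
      linarith
    · rw [hv0, hv1] at heq
      have h1 := (ρ'mem l).2
      have h2 := him0 k
      rw [heq, h1] at h2
      exact absurd h2 (lt_irrefl 0)
    · rw [hv0, hv2] at heq
      have h2 := (ζmem' l).2.1
      have h3 := him0 k
      rw [heq] at h3
      linarith
    · rw [hv0, hv0] at heq
      have := ζinj ((starRingEnd ℂ).injective heq)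
      omega
  · -- SurjOn
    intro x hx
    simp only [Set.mem_setOf_eq] at hx
    rcases lt_trichotomy x.im 0 with h | h | h
    · have hc : IsAlgebraic ℚ ((starRingEnd ℂ) x) := isAlg_conj hx
      have him : 0 < ((starRingEnd ℂ) x).im := by
        rw [Complex.conj_im]; linarith
      obtain ⟨k, hk⟩ : (starRingEnd ℂ) x ∈ Set.range ζ := by
        rw [ζrange]; exact ⟨hc, him⟩
      refine ⟨3 * k + 3, by simp only [Set.mem_setOf_eq]; omega, ?_⟩
      rw [hv0, hk, Complex.conj_conj]
    · obtain ⟨k, hk⟩ : x ∈ Set.range ρ' := by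
        rw [ρ'range]; exact ⟨hx, h⟩
      refine ⟨3 * k + 1, by simp only [Set.mem_setOf_eq]; omega, ?_⟩
      rw [hv1, hk]
    · obtain ⟨k, hk⟩ : x ∈ Set.range ζ := by
        rw [ζrange]; exact ⟨hx, h⟩
      refine ⟨3 * k + 2, by simp only [Set.mem_setOf_eq]; omega, ?_⟩
      rw [hv2, hk]
  · -- α 1 = 0
    rw [show (1 : ℕ) = 3 * 0 + 1 from rfl, hv1]
    exact ρ'0
  · -- the quantitative properties
    intro n hn
    have e1 : 3 * n - 1 = 3 * (n - 1) + 2 := by omega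
    have e2 : 3 * n = 3 * (n - 1) + 3 := by omega
    have w1 : α (3 * n - 1) = ζ (n - 1) := by rw [e1, hv2]
    have w2 : α (3 * n) = (starRingEnd ℂ) (ζ (n - 1)) := by rw [e2, hv0]
    have w3 : α (3 * n + 1) = ρ' n := hv1 n
    rw [w1, w2, w3]
    have hcast : ((n - 1 : ℕ) : ℝ) + 1 = (n : ℝ) := by
      rw [Nat.cast_sub hn]
      push_cast
      ring
    have habs : ‖ζ (n - 1)‖ < (n : ℝ) := by
      have := (ζmem' (n - 1)).2.2
      rwa [hcast] at this
    refine ⟨ne_of_gt (ζmem' (n - 1)).2.1, ?_, rfl, (ρ'mem n).2, habs, ?_, ρ'abs n hn⟩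
    · rw [Complex.conj_im]
      have := (ζmem' (n - 1)).2.1
      intro hcon
      rw [neg_eq_zero] at hcon
      exact absurd hcon (ne_of_gt this)
    · rw [Complex.norm_conj]
      exact habs
end

section
/- Let f : ℂ → ℂ be an entire function, let (f_n) be a sequence of entire functions converging to f locally uniformly on ℂ, and suppose f is nonconstant. Let α ∈ ℂ, r > 0, and let S ⊆ {z : |z| < r} be a finite set such that for all sufficiently large n, {z : |z| < r and f_n(z) = α} = S. Then {z : |z| < r and f(z) = α} = S. -/
/-- If entire functions `f n` converge locally uniformly to a nonconstant
entire function `f`, and for all large `n` the `α`-points of `f n` in the open disc of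
radius `r` form the fixed finite set `S ⊆ B(0,r)`, then the `α`-points of `f` in that
disc are exactly `S`. -/
theorem limit_preimage_eq (f : ℂ → ℂ) (hf : Differentiable ℂ f)
    (fn : ℕ → ℂ → ℂ) (hfn : ∀ n, Differentiable ℂ (fn n))
    (hconv : TendstoLocallyUniformly fn f Filter.atTop)
    (hnc : ¬ ∃ c : ℂ, f = fun _ => c)
    (α : ℂ) (r : ℝ) (hr : 0 < r)
    (S : Set ℂ) (hSfin : S.Finite) (hSball : S ⊆ {z : ℂ | ‖z‖ < r})
    (heq : ∀ᶠ n in Filter.atTop, {z : ℂ | ‖z‖ < r ∧ fn n z = α} = S) :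
    {z : ℂ | ‖z‖ < r ∧ f z = α} = S := by
  ext z
  simp only [Set.mem_setOf_eq]
  constructor
  · rintro ⟨hzr, hzα⟩
    by_contra hzS
    -- isolated zeros of f - α at z
    have han : AnalyticAt ℂ (fun w => f w - α) z := (hf.analyticAt z).sub analyticAt_const
    rcases han.eventually_eq_zero_or_eventually_ne_zero with h0 | h0
    · -- f ≡ α near z, hence constant everywhere
      exfalso
      apply hnc
      refine ⟨α, funext fun x => ?_⟩
      have hF : AnalyticOnNhd ℂ f Set.univ := fun y _ => hf.analyticAt y
      have hG : AnalyticOnNhd ℂ (fun _ => α) (Set.univ : Set ℂ) :=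
        fun y _ => analyticAt_const
      have hfg : f =ᶠ[nhds z] fun _ => α := h0.mono fun w hw => by
        simpa [sub_eq_zero] using hw
      exact hF.eqOn_of_preconnected_of_eventuallyEq hG isPreconnected_univ
        (Set.mem_univ z) hfg (Set.mem_univ x)
    · -- f ≠ α on a punctured neighborhood
      obtain ⟨δ₀, hδ₀, hball0⟩ := Metric.mem_nhdsWithin_iff.mp h0
      -- ball avoiding S
      have hSc : IsOpen Sᶜ := hSfin.isClosed.isOpen_compl
      obtain ⟨δ₁, hδ₁, hball1⟩ := Metric.isOpen_iff.mp hSc z hzS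
      set δ : ℝ := min (δ₀ / 2) (min (δ₁ / 2) ((r - ‖z‖) / 2)) with hδdef
      have hδpos : 0 < δ := by
        have h1 : 0 < r - ‖z‖ := by linarith
        positivity
      have hδlt0 : δ < δ₀ := lt_of_le_of_lt (min_le_left _ _) (by linarith)
      have hδlt1 : δ < δ₁ :=
        lt_of_le_of_lt (le_trans (min_le_right _ _) (min_le_left _ _)) (by linarith)
      have hδltr : ‖z‖ + δ < r := by
        have h2 : δ ≤ (r - ‖z‖) / 2 :=
          le_trans (min_le_right _ _) (min_le_right _ _)
        linarith
      -- closed ball is inside ball 0 r and avoids S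
      have hsub : ∀ w ∈ Metric.closedBall z δ, ‖w‖ < r ∧ w ∉ S := by
        intro w hw
        rw [Metric.mem_closedBall] at hw
        constructor
        · calc ‖w‖ ≤ ‖w - z‖ + ‖z‖ := by
                simpa using norm_add_le (w - z) z
            _ ≤ δ + ‖z‖ := by
                have : dist w z = ‖w - z‖ := Complex.dist_eq w z
                linarith [this ▸ hw]
            _ < r := by linarith
        · exact hball1 (by rw [Metric.mem_ball]; linarith)
      -- minimum of ‖f - α‖ on the sphere
      have hsphne : (Metric.sphere z δ).Nonempty :=
        NormedSpace.sphere_nonempty.mpr hδpos.le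
      have hcont : ContinuousOn (fun w => ‖f w - α‖) (Metric.sphere z δ) :=
        ((hf.continuous.sub continuous_const).norm).continuousOn
      obtain ⟨w₀, hw₀mem, hw₀min⟩ :=
        (isCompact_sphere z δ).exists_isMinOn hsphne hcont
      set m : ℝ := ‖f w₀ - α‖ with hm
      have hmpos : 0 < m := by
        rw [hm, norm_pos_iff]
        have hw₀ne : w₀ ≠ z := by
          intro h
          rw [h, Metric.mem_sphere, dist_self] at hw₀mem
          exact hδpos.ne hw₀mem
        have hd : w₀ ∈ Metric.ball z δ₀ := by
          rw [Metric.mem_ball]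
          rw [Metric.mem_sphere] at hw₀mem
          rw [hw₀mem]; exact hδlt0
        exact hball0 ⟨hd, hw₀ne⟩
      -- uniform convergence on the closed ball
      have huc : TendstoUniformlyOn fn f Filter.atTop (Metric.closedBall z δ) :=
        (tendstoLocallyUniformly_iff_forall_isCompact.mp hconv) _
          (isCompact_closedBall z δ)
      rw [Metric.tendstoUniformlyOn_iff] at huc
      have hev := (huc (m / 2) (by linarith)).and heq
      obtain ⟨n, hdist, hSn⟩ := hev.exists
      -- fn n ≠ α on the closed ball
      have hne : ∀ w ∈ Metric.closedBall z δ, fn n w - α ≠ 0 := by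
        intro w hw hcontra
        obtain ⟨hwr, hwS⟩ := hsub w hw
        exact hwS (hSn ▸ Set.mem_setOf_eq ▸ ⟨hwr, sub_eq_zero.mp hcontra⟩)
      -- maximum modulus principle for g = (fn n - α)⁻¹
      set g : ℂ → ℂ := fun w => (fn n w - α)⁻¹ with hg
      have hgd : DifferentiableOn ℂ g (Metric.closedBall z δ) :=
        (((hfn n).differentiableOn.sub_const α).inv hne)
      have hdc : DiffContOnCl ℂ g (Metric.ball z δ) := by
        rw [← closure_ball z hδpos.ne'] at hgd
        exact hgd.diffContOnCl
      have hbound : ∀ w ∈ frontier (Metric.ball z δ), ‖g w‖ ≤ (m / 2)⁻¹ := by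
        intro w hw
        rw [frontier_ball z hδpos.ne'] at hw
        have h1 : m ≤ ‖f w - α‖ := hw₀min hw
        have h2 : dist (f w) (fn n w) < m / 2 :=
          hdist w (Metric.sphere_subset_closedBall hw)
        have h3 : m / 2 ≤ ‖fn n w - α‖ := by
          have : ‖f w - α‖ - ‖f w - fn n w‖ ≤ ‖fn n w - α‖ := by
            have := norm_sub_norm_le (f w - α) (f w - fn n w)
            simpa [sub_sub_sub_cancel_left] using this
          rw [dist_eq_norm] at h2
          linarith
        rw [hg]
        simp only [norm_inv]
        exact inv_anti₀ (by linarith) h3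
      have hz_cl : z ∈ closure (Metric.ball z δ) := by
        rw [closure_ball z hδpos.ne']
        exact Metric.mem_closedBall_self hδpos.le
      have hmax := Complex.norm_le_of_forall_mem_frontier_norm_le
        Metric.isBounded_ball hdc hbound hz_cl
      -- but ‖g z‖ > (m/2)⁻¹
      have hzself : ‖fn n z - α‖ < m / 2 := by
        have := hdist z (Metric.mem_closedBall_self hδpos.le)
        rw [dist_eq_norm, hzα] at this
        simpa [norm_sub_rev] using this
      have hzne : fn n z - α ≠ 0 := hne z (Metric.mem_closedBall_self hδpos.le)
      have : (m / 2)⁻¹ < ‖g z‖ := by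
        rw [hg]
        simp only [norm_inv]
        exact inv_strictAnti₀ (norm_pos_iff.mpr hzne) hzself
      linarith
  · intro hzS
    refine ⟨hSball hzS, ?_⟩
    have hpt : Filter.Tendsto (fun n => fn n z) Filter.atTop (nhds (f z)) :=
      (hconv.tendstoLocallyUniformlyOn.tendsto_at (Set.mem_univ z))
    have hconst : Filter.Tendsto (fun n => fn n z) Filter.atTop (nhds α) := by
      have : ∀ᶠ n in Filter.atTop, fn n z = α := heq.mono fun n hn => by
        have : z ∈ {w : ℂ | ‖w‖ < r ∧ fn n w = α} := hn ▸ hzS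
        exact this.2
      exact Filter.Tendsto.congr' (Filter.EventuallyEq.symm this) tendsto_const_nhds
    exact tendsto_nhds_unique hpt hconst
end

section
/- Let f : ℂ → ℂ be a nonconstant entire function and (f_n) a sequence of entire functions converging to f locally uniformly on ℂ. If f(w) = α for some w ∈ ℂ and α ∈ ℂ, then for every ε > 0 there exists N such that for all n ≥ N there is some z with |z − w| < ε and f_n(z) = α. -/
open Metric Filter

/-- (Hurwitz-type statement) If entire functions `f n` converge locally
uniformly to a nonconstant entire function `f` and `f w = α`, then for every `ε > 0`
there is `N` such that for all `n ≥ N` there is `z` with `|z - w| < ε` and `f n z = α`. -/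
theorem hurwitz_nearby_solutions (f : ℂ → ℂ) (hf : Differentiable ℂ f)
    (hnc : ¬ ∃ c : ℂ, f = fun _ => c)
    (fn : ℕ → ℂ → ℂ) (hfn : ∀ n, Differentiable ℂ (fn n))
    (hconv : TendstoLocallyUniformly fn f Filter.atTop)
    (w α : ℂ) (hw : f w = α) (ε : ℝ) (hε : 0 < ε) :
    ∃ N : ℕ, ∀ n ≥ N, ∃ z : ℂ, ‖z - w‖ < ε ∧ fn n z = α := by
  -- g = f - α is analytic and not identically zero
  have hg : Differentiable ℂ (fun z => f z - α) := hf.sub_const α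
  have hgA : AnalyticOnNhd ℂ (fun z => f z - α) Set.univ := fun z _ =>
    hg.analyticAt z
  -- zeros of g are isolated near w
  have hiso : ∀ᶠ z in nhdsWithin w {w}ᶜ, f z - α ≠ 0 := by
    rcases (hgA w (Set.mem_univ w)).eventually_eq_zero_or_eventually_ne_zero with h | h
    · exfalso
      apply hnc
      refine ⟨α, funext fun z => ?_⟩
      have := hgA.eqOn_zero_of_preconnected_of_eventuallyEq_zero
        isPreconnected_univ (Set.mem_univ w) h (Set.mem_univ z)
      simpa [sub_eq_zero] using this
    · exact h
  -- choose a radius r < ε with g ≠ 0 on the punctured closed ball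
  obtain ⟨δ, hδpos, hδ⟩ := Metric.nhdsWithin_basis_ball.eventually_iff.mp hiso
  set r : ℝ := min (δ / 2) (ε / 2) with hr
  have hrpos : 0 < r := lt_min (by linarith) (by linarith)
  have hrδ : r < δ := lt_of_le_of_lt (min_le_left _ _) (by linarith)
  have hrε : r < ε := lt_of_le_of_lt (min_le_right _ _) (by linarith)
  have hsphere : ∀ z ∈ sphere w r, f z - α ≠ 0 := by
    intro z hz
    have hzw : z ≠ w := by
      intro h; rw [h, mem_sphere, dist_self] at hz; exact hrpos.ne' hz.symm
    exact hδ ⟨by rw [mem_sphere] at hz; simpa [mem_ball, hz] using hrδ, hzw⟩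
  -- m = min of |g| on the sphere, positive
  have hcpt : IsCompact (sphere w r) := isCompact_sphere w r
  have hne : (sphere w r).Nonempty := NormedSpace.sphere_nonempty.mpr hrpos.le
  obtain ⟨z₀, hz₀, hz₀min⟩ := hcpt.exists_isMinOn hne (hg.continuous.norm.continuousOn)
  set m : ℝ := ‖f z₀ - α‖ with hm
  have hmpos : 0 < m := norm_pos_iff.mpr (hsphere z₀ hz₀)
  -- uniform convergence on the sphere
  have huc : TendstoUniformlyOn fn f atTop (sphere w r) :=
    (tendstoLocallyUniformly_iff_forall_isCompact.mp hconv) _ hcpt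
  have h1 : ∀ᶠ n in atTop, ∀ z ∈ sphere w r, dist (f z) (fn n z) < m / 2 :=
    Metric.tendstoUniformlyOn_iff.mp huc (m / 2) (by linarith)
  -- pointwise convergence at w
  have h2 : ∀ᶠ n in atTop, dist (fn n w) (f w) < m / 2 :=
    (Metric.tendsto_nhds.mp ((tendstoLocallyUniformlyOn_univ.mpr hconv).tendsto_at (Set.mem_univ w))) (m / 2) (by linarith)
  obtain ⟨N, hN⟩ := (h1.and h2).exists_forall_of_atTop
  refine ⟨N, fun n hn => ?_⟩
  by_contra hcon
  push_neg at hcon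
  obtain ⟨hN1, hN2⟩ := hN n hn
  -- fn n - α has no zero on the closed ball of radius r
  have hnz : ∀ z ∈ closedBall w r, fn n z - α ≠ 0 := by
    intro z hz h0
    have : ‖z - w‖ < ε := by
      have := mem_closedBall.mp hz
      calc ‖z - w‖ = dist z w := (Complex.dist_eq z w).symm
        _ ≤ r := this
        _ < ε := hrε
    exact (sub_ne_zero.mpr (hcon z this)) h0 |>.elim
  -- on the sphere, |fn n z - α| > m/2
  have hbd : ∀ z ∈ sphere w r, m / 2 ≤ ‖fn n z - α‖ := by
    intro z hz
    have hm_le : m ≤ ‖f z - α‖ := hz₀min hz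
    have hd : ‖f z - fn n z‖ < m / 2 := by
      simpa [dist_eq_norm] using hN1 z hz
    have : ‖f z - α‖ - ‖f z - fn n z‖ ≤ ‖fn n z - α‖ := by
      have := norm_sub_norm_le (f z - α) (f z - fn n z)
      simpa [sub_sub_sub_cancel_left] using this
    linarith
  -- apply maximum modulus to 1/(fn n - α)
  have hdiff : DiffContOnCl ℂ (fun z => (fn n z - α)⁻¹) (ball w r) := by
    have : DifferentiableOn ℂ (fun z => (fn n z - α)⁻¹) (closedBall w r) := by
      intro z hz
      exact (((hfn n z).sub_const α).differentiableWithinAt.inv (hnz z hz))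
    exact ⟨this.mono ball_subset_closedBall,
      this.continuousOn.mono closure_ball_subset_closedBall⟩
  have hfr : ∀ z ∈ frontier (ball w r), ‖(fn n z - α)⁻¹‖ ≤ 2 / m := by
    intro z hz
    rw [frontier_ball w hrpos.ne'] at hz
    have h := hbd z hz
    have h2 : (2:ℝ)/m = (m/2)⁻¹ := by field_simp
    rw [norm_inv, h2]
    exact inv_anti₀ (by linarith) h
  have hmax : ‖(fn n w - α)⁻¹‖ ≤ 2 / m := by
    refine Complex.norm_le_of_forall_mem_frontier_norm_le isBounded_ball hdiff hfr ?_
    exact subset_closure (mem_ball_self hrpos)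
  -- but fn n w is close to α, contradiction
  have hclose : ‖fn n w - α‖ < m / 2 := by
    simpa [dist_eq_norm, hw] using hN2
  have hne0 : fn n w - α ≠ 0 := sub_ne_zero.mpr (hcon w (by simpa using hε))
  rw [norm_inv] at hmax
  have hpos : 0 < ‖fn n w - α‖ := norm_pos_iff.mpr hne0
  have hmul := mul_le_mul_of_nonneg_right hmax (norm_nonneg (fn n w - α))
  rw [inv_mul_cancel₀ hpos.ne', div_mul_eq_mul_div, le_div_iff₀ hmpos, one_mul] at hmul
  linarith
end

section
/- Let f : ℂ → ℂ be an entire function which is algebraic, i.e. there exists a nonzero polynomial P ∈ ℂ[X,Y] with P(z, f(z)) = 0 for all z ∈ ℂ, and suppose f(Q̄) ⊆ Q̄. Then f is a polynomial function with algebraic coefficients: there exists Q ∈ Q̄[z] with f(z) = Q(z) for all z ∈ ℂ. -/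
open Polynomial Nat

lemma root_bound (n : ℕ) (hn : 0 < n) (a : ℕ → ℂ) (u : ℂ) (ε : ℝ) (hε : 0 < ε)
    (han : ε ≤ ‖a n‖) (h : ∑ k ∈ Finset.range (n + 1), a k * u ^ k = 0) (B : ℝ)
    (hB : ∀ k < n, ‖a k‖ ≤ B) : ‖u‖ ≤ max 1 (n * B / ε) := by
  rcases le_or_gt ‖u‖ 1 with h1 | h1
  · exact h1.trans (le_max_left _ _)
  refine le_trans ?_ (le_max_right _ _)
  have hu0 : (0:ℝ) < ‖u‖ ^ (n - 1) := pow_pos (by linarith) _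
  have key : ‖a n‖ * ‖u‖ ^ n ≤ n * B * ‖u‖ ^ (n - 1) := by
    have hsplit : a n * u ^ n = -∑ k ∈ Finset.range n, a k * u ^ k := by
      have := Finset.sum_range_succ (fun k => a k * u ^ k) n
      rw [h] at this
      linear_combination -this
    calc ‖a n‖ * ‖u‖ ^ n = ‖a n * u ^ n‖ := by rw [norm_mul, norm_pow]
      _ = ‖∑ k ∈ Finset.range n, a k * u ^ k‖ := by rw [hsplit, norm_neg]
      _ ≤ ∑ k ∈ Finset.range n, ‖a k * u ^ k‖ := norm_sum_le _ _
      _ ≤ ∑ k ∈ Finset.range n, B * ‖u‖ ^ (n - 1) := by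
          refine Finset.sum_le_sum fun k hk => ?_
          rw [norm_mul, norm_pow]
          exact mul_le_mul (hB k (Finset.mem_range.mp hk))
            (pow_le_pow_right₀ h1.le (Nat.le_sub_one_of_lt (Finset.mem_range.mp hk)))
            (pow_nonneg (norm_nonneg _) _) ((norm_nonneg _).trans (hB 0 hn))
      _ = n * B * ‖u‖ ^ (n - 1) := by
          rw [Finset.sum_const, Finset.card_range, nsmul_eq_mul]; ring
  have hn' : ‖u‖ ^ n = ‖u‖ * ‖u‖ ^ (n - 1) := by
    conv_lhs => rw [show n = 1 + (n - 1) by omega, pow_add, pow_one]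
  have : ε * (‖u‖ * ‖u‖ ^ (n - 1)) ≤ n * B * ‖u‖ ^ (n - 1) := by
    rw [← hn']
    exact le_trans (by nlinarith [pow_pos (show (0:ℝ) < ‖u‖ by linarith) n]) key
  rw [div_eq_mul_inv]
  have h2 : ε * ‖u‖ ≤ n * B := by
    have h3 : (ε * ‖u‖) * ‖u‖ ^ (n - 1) ≤ (n * B) * ‖u‖ ^ (n - 1) := by
      rw [mul_assoc]; exact this
    exact le_of_mul_le_mul_right h3 hu0
  calc ‖u‖ = ε * ‖u‖ * ε⁻¹ := by field_simp
    _ ≤ n * B * ε⁻¹ := by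
        apply mul_le_mul_of_nonneg_right h2 (by positivity)

lemma poly_lower (q : Polynomial ℂ) (hq : q ≠ 0) : ∃ ε R₁ : ℝ, 0 < ε ∧
    ∀ z : ℂ, R₁ ≤ ‖z‖ → ε ≤ ‖q.eval z‖ := by
  rcases lt_or_ge 0 q.degree with hd | hd
  · have ht : Filter.Tendsto (fun z : ℂ => ‖q.eval z‖) (Filter.comap norm Filter.atTop)
        Filter.atTop := q.tendsto_norm_atTop hd Filter.tendsto_comap
    have hev : ∀ᶠ z : ℂ in Filter.comap norm Filter.atTop, 1 ≤ ‖q.eval z‖ :=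
      ht.eventually_ge_atTop 1
    rw [Filter.eventually_comap] at hev
    obtain ⟨R₁, hR₁⟩ := Filter.eventually_atTop.mp hev
    exact ⟨1, R₁, one_pos, fun z hz => hR₁ ‖z‖ hz z rfl⟩
  · refine ⟨‖q.coeff 0‖, 0, norm_pos_iff.mpr fun h => hq ?_, fun z _ => ?_⟩
    · rw [eq_C_of_degree_le_zero hd, h, map_zero]
    · conv_rhs => rw [eq_C_of_degree_le_zero hd, eval_C]

noncomputable def Phi : MvPolynomial (Fin 1) ℂ →ₐ[ℂ] Polynomial ℂ :=
  MvPolynomial.aeval (fun _ => Polynomial.X)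

lemma Phi_eval (g : MvPolynomial (Fin 1) ℂ) (z : ℂ) :
    MvPolynomial.eval (fun _ : Fin 1 => z) g = (Phi g).eval z := by
  induction g using MvPolynomial.induction_on with
  | C a => simp [Phi]
  | add p q hp hq => simp [hp, hq]
  | mul_X p i hp => simp [Phi, hp]

lemma Phi_ne_zero (g : MvPolynomial (Fin 1) ℂ) (hg : g ≠ 0) : Phi g ≠ 0 := by
  intro h
  apply hg
  apply MvPolynomial.funext (R := ℂ)
  intro x
  have hx : x = fun _ : Fin 1 => x 0 := by
    funext i; congr 1; exact Subsingleton.elim i 0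
  rw [hx, Phi_eval, h, map_zero]
  simp

lemma poly_growth (q : Polynomial ℂ) : ∃ C : ℝ, 0 ≤ C ∧
    ∀ z : ℂ, 1 ≤ ‖z‖ → ‖q.eval z‖ ≤ C * ‖z‖ ^ q.natDegree := by
  refine ⟨∑ i ∈ Finset.range (q.natDegree + 1), ‖q.coeff i‖,
    Finset.sum_nonneg fun _ _ => norm_nonneg _, fun z hz => ?_⟩
  rw [q.eval_eq_sum_range]
  calc ‖∑ i ∈ Finset.range (q.natDegree + 1), q.coeff i * z ^ i‖
      ≤ ∑ i ∈ Finset.range (q.natDegree + 1), ‖q.coeff i * z ^ i‖ := norm_sum_le _ _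
    _ ≤ ∑ i ∈ Finset.range (q.natDegree + 1), ‖q.coeff i‖ * ‖z‖ ^ q.natDegree := by
        refine Finset.sum_le_sum fun i hi => ?_
        rw [norm_mul, norm_pow]
        exact mul_le_mul_of_nonneg_left
          (pow_le_pow_right₀ hz (Nat.lt_succ_iff.mp (Finset.mem_range.mp hi)))
          (norm_nonneg _)
    _ = _ := by rw [← Finset.sum_mul]


lemma setup (f : ℂ → ℂ) (P : MvPolynomial (Fin 2) ℂ) (hP : P ≠ 0)
    (hPz : ∀ z : ℂ, MvPolynomial.eval ![z, f z] P = 0) :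
    ∃ p : Polynomial (MvPolynomial (Fin 1) ℂ), p ≠ 0 ∧
      ∀ z : ℂ, ∑ k ∈ Finset.range (p.natDegree + 1),
        (Phi (p.coeff k)).eval z * (f z) ^ k = 0 := by
  set P' := MvPolynomial.rename (Equiv.swap (0 : Fin 2) 1) P with hP'
  have hP'0 : P' ≠ 0 := fun h => hP (by
    have := MvPolynomial.rename_injective (R := ℂ) _ (Equiv.swap (0 : Fin 2) 1).injective
    exact this (by simpa using h))
  refine ⟨MvPolynomial.finSuccEquiv ℂ 1 P', fun h => hP'0 ((map_eq_zero_iff _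
    (MvPolynomial.finSuccEquiv ℂ 1).injective).mp h), fun z => ?_⟩
  have h1 : MvPolynomial.eval (Fin.cons (f z) (fun _ : Fin 1 => z)) P' = 0 := by
    rw [hP', MvPolynomial.eval_rename]
    have : (Fin.cons (f z) (fun _ : Fin 1 => z) : Fin 2 → ℂ) ∘ (Equiv.swap (0 : Fin 2) 1)
        = ![z, f z] := by
      funext i
      fin_cases i <;> simp [Equiv.swap_apply_def, Matrix.cons_val_zero, Matrix.cons_val_one]
    rw [this]; exact hPz z
  rw [MvPolynomial.eval_eq_eval_mv_eval'] at h1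
  rw [Polynomial.eval_map, Polynomial.eval₂_eq_sum_range] at h1
  rw [← h1]
  apply Finset.sum_congr rfl
  intro k _
  rw [Phi_eval]
lemma growth_of_algebraic (f : ℂ → ℂ)
    (halg : ∃ P : MvPolynomial (Fin 2) ℂ, P ≠ 0 ∧
      ∀ z : ℂ, MvPolynomial.eval ![z, f z] P = 0) :
    ∃ (m : ℕ) (C R₀ : ℝ), 0 ≤ C ∧ 1 ≤ R₀ ∧
      ∀ z : ℂ, R₀ ≤ ‖z‖ → ‖f z‖ ≤ C * ‖z‖ ^ m := by
  obtain ⟨P, hP, hPz⟩ := halg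
  obtain ⟨p, hp0, hrel⟩ := setup f P hP hPz
  set n := p.natDegree with hn
  have hAn : Phi (p.coeff n) ≠ 0 :=
    Phi_ne_zero _ (by simpa [hn] using mt leadingCoeff_eq_zero.mp hp0)
  have hnpos : 0 < n := by
    rcases Nat.eq_zero_or_pos n with h | h
    · exfalso
      apply hAn
      rw [show n = 0 from h]
      apply Polynomial.funext
      intro z
      have := hrel z
      rw [h] at this
      simpa using this
    · exact h
  -- upper bounds for lower coefficients
  choose Cc hCc0 hCcb using fun k => poly_growth (Phi (p.coeff k))
  set m := Finset.sup (Finset.range n) (fun k => (Phi (p.coeff k)).natDegree) with hm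
  set S := ∑ k ∈ Finset.range n, Cc k with hS
  have hS0 : 0 ≤ S := Finset.sum_nonneg fun k _ => hCc0 k
  -- lower bound for leading coefficient
  obtain ⟨ε, R₁, hε, hlow⟩ := poly_lower (Phi (p.coeff n)) hAn
  refine ⟨m, max 1 (n * S / ε), max 1 R₁, le_max_of_le_left zero_le_one,
    le_max_left _ _, fun z hz => ?_⟩
  have hz1 : 1 ≤ ‖z‖ := le_trans (le_max_left _ _) hz
  have hzm : (1:ℝ) ≤ ‖z‖ ^ m := one_le_pow₀ hz1
  have hbound := root_bound n hnpos (fun k => (Phi (p.coeff k)).eval z) (f z) ε hε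
    (hlow z (le_trans (le_max_right _ _) hz)) (hrel z) (S * ‖z‖ ^ m) ?_
  · refine hbound.trans ?_
    rw [max_mul_of_nonneg _ _ (by positivity : (0:ℝ) ≤ ‖z‖ ^ m)]
    apply max_le_max
    · simpa using hzm
    · rw [div_mul_eq_mul_div, mul_assoc]
  · intro k hk
    refine (hCcb k z hz1).trans ?_
    have h1 : Cc k * ‖z‖ ^ (Phi (p.coeff k)).natDegree ≤ Cc k * ‖z‖ ^ m :=
      mul_le_mul_of_nonneg_left
        (pow_le_pow_right₀ hz1 (Finset.le_sup (f := fun k => (Phi (p.coeff k)).natDegree) (Finset.mem_range.mpr hk))) (hCc0 k)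
    refine h1.trans (mul_le_mul_of_nonneg_right ?_ (by positivity))
    exact Finset.single_le_sum (fun k _ => hCc0 k) (Finset.mem_range.mpr hk)

lemma deriv_vanish (f : ℂ → ℂ) (hf : Differentiable ℂ f) (m : ℕ) (C R₀ : ℝ)
    (hC : 0 ≤ C) (hR₀ : 1 ≤ R₀) (hg : ∀ z : ℂ, R₀ ≤ ‖z‖ → ‖f z‖ ≤ C * ‖z‖ ^ m) :
    ∀ n : ℕ, m < n → iteratedDeriv n f 0 = 0 := by
  intro n hn
  have key : ∀ R : ℝ, R₀ ≤ R → ‖iteratedDeriv n f 0‖ ≤ n ! * C * R ^ m / R ^ n := by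
    intro R hR
    have hRpos : (0:ℝ) < R := lt_of_lt_of_le (by linarith) hR
    set Rn : NNReal := R.toNNReal with hRn
    have hRnpos : (0:NNReal) < Rn := by simp [hRn, hRpos]
    have hcoe : ((Rn : ℝ)) = R := Real.coe_toNNReal _ hRpos.le
    have h := hf.hasFPowerSeriesOnBall 0 hRnpos
    have hfact := h.factorial_smul (1 : ℂ) n
    have hit : iteratedDeriv n f 0 = n ! • (cauchyPowerSeries f 0 Rn n (fun _ => 1)) := by
      rw [iteratedDeriv, hfact]
    have hIb : (∫ θ : ℝ in (0)..2 * Real.pi, ‖f (circleMap 0 (Rn:ℝ) θ)‖)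
        ≤ 2 * Real.pi * (C * R ^ m) := by
      have hint : ∀ θ ∈ Set.Icc (0:ℝ) (2 * Real.pi), ‖f (circleMap 0 (Rn:ℝ) θ)‖ ≤ C * R ^ m := by
        intro θ _
        have : ‖circleMap 0 (Rn:ℝ) θ‖ = R := by
          rw [norm_circleMap_zero, hcoe, abs_of_pos hRpos]
        rw [← this] at hR ⊢
        calc ‖f (circleMap 0 (Rn:ℝ) θ)‖ ≤ C * ‖circleMap 0 (Rn:ℝ) θ‖ ^ m := hg _ hR
          _ = C * ‖circleMap 0 (Rn:ℝ) θ‖ ^ m := rfl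
      calc (∫ θ : ℝ in (0)..2 * Real.pi, ‖f (circleMap 0 (Rn:ℝ) θ)‖)
          ≤ ∫ _ : ℝ in (0)..2 * Real.pi, C * R ^ m := by
            apply intervalIntegral.integral_mono_on Real.two_pi_pos.le
            · exact ((hf.continuous.comp (continuous_circleMap _ _)).norm).intervalIntegrable _ _
            · exact intervalIntegrable_const
            · exact hint
        _ = 2 * Real.pi * (C * R ^ m) := by
            rw [intervalIntegral.integral_const, smul_eq_mul]; ring
    have hnorm : ‖iteratedDeriv n f 0‖ ≤ n ! * ((2 * Real.pi)⁻¹ *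
        (2 * Real.pi * (C * R ^ m))) * |R|⁻¹ ^ n := by
      rw [hit, nsmul_eq_mul, norm_mul, Complex.norm_natCast]
      have h1 : ‖cauchyPowerSeries f 0 (Rn:ℝ) n (fun _ => 1)‖
          ≤ ‖cauchyPowerSeries f 0 (Rn:ℝ) n‖ := by
        calc ‖cauchyPowerSeries f 0 (Rn:ℝ) n (fun _ => 1)‖
            ≤ ‖cauchyPowerSeries f 0 (Rn:ℝ) n‖ * ∏ _i : Fin n, ‖(1:ℂ)‖ :=
              (cauchyPowerSeries f 0 (Rn:ℝ) n).le_opNorm _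
          _ = ‖cauchyPowerSeries f 0 (Rn:ℝ) n‖ := by simp
      have h2 := norm_cauchyPowerSeries_le f 0 (Rn:ℝ) n
      rw [hcoe] at h1 h2 ⊢
      calc (n ! : ℝ) * ‖cauchyPowerSeries f 0 R n (fun _ => 1)‖
          ≤ (n ! : ℝ) * (((2 * Real.pi)⁻¹ *
              ∫ θ : ℝ in (0)..2 * Real.pi, ‖f (circleMap 0 R θ)‖) * |R|⁻¹ ^ n) := by
            apply mul_le_mul_of_nonneg_left (h1.trans h2) (by positivity)
        _ ≤ _ := by
            rw [← mul_assoc]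
            apply mul_le_mul_of_nonneg_right _ (by positivity)
            rw [mul_assoc]
            apply mul_le_mul_of_nonneg_left _ (by positivity)
            apply mul_le_mul_of_nonneg_left _ (by positivity)
            rw [hcoe] at hIb
            linarith [hIb]
    refine hnorm.trans (le_of_eq ?_)
    rw [abs_of_pos hRpos]
    field_simp
    rw [mul_assoc, ← mul_pow, one_div_mul_cancel hRpos.ne', one_pow, mul_one]
  have htend : Filter.Tendsto (fun R : ℝ => n ! * C * R ^ m / R ^ n)
      Filter.atTop (nhds 0) := by
    have h1 : Filter.Tendsto (fun R : ℝ => (n ! * C) * R ^ ((m:ℤ) - n))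
        Filter.atTop (nhds 0) := by
      have := tendsto_zpow_atTop_zero (𝕜 := ℝ) (n := (m:ℤ) - n) (by omega)
      simpa using this.const_mul (n ! * C)
    apply h1.congr'
    filter_upwards [Filter.eventually_gt_atTop 0] with R hR
    rw [zpow_sub₀ hR.ne', zpow_natCast, zpow_natCast]
    ring
  have : ‖iteratedDeriv n f 0‖ ≤ 0 :=
    ge_of_tendsto htend (Filter.eventually_atTop.mpr ⟨R₀, key⟩)
  simpa using norm_le_zero_iff.mp this

lemma entire_eq_poly (f : ℂ → ℂ) (hf : Differentiable ℂ f) (m : ℕ)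
    (hd : ∀ n : ℕ, m < n → iteratedDeriv n f 0 = 0) :
    ∃ Q : Polynomial ℂ, ∀ z : ℂ, f z = Q.eval z := by
  refine ⟨∑ k ∈ Finset.range (m + 1),
    Polynomial.C ((k ! : ℂ)⁻¹ * iteratedDeriv k f 0) * Polynomial.X ^ k, fun z => ?_⟩
  have h := Complex.taylorSeries_eq_of_entire' (c := 0) (z := z) hf
  simp only [sub_zero] at h
  rw [← h]
  rw [tsum_eq_sum (s := Finset.range (m + 1)) (by
    intro n hn
    rw [hd n (by simpa using hn)]
    ring)]
  rw [eval_finset_sum]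
  apply Finset.sum_congr rfl
  intro k _
  simp

lemma basis_map (s : Finset ℕ) (i : ℕ) :
    Polynomial.map (algebraMap ℚ ℂ) (Lagrange.basis s (fun j : ℕ => (j : ℚ)) i)
      = Lagrange.basis s (fun j : ℕ => (j : ℂ)) i := by
  rw [Lagrange.basis, Lagrange.basis, Polynomial.map_prod]
  apply Finset.prod_congr rfl
  intro j _
  rw [Lagrange.basisDivisor, Lagrange.basisDivisor, Polynomial.map_mul, map_C,
    Polynomial.map_sub, Polynomial.map_X, map_C, map_inv₀, map_sub]
  push_cast
  norm_num

lemma coeffs_algebraic (Q : Polynomial ℂ) (hv : ∀ n : ℕ, IsAlgebraic ℚ (Q.eval (n : ℂ))) :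
    ∀ i : ℕ, IsAlgebraic ℚ (Q.coeff i) := by
  by_cases hQ0 : Q = 0
  · intro i; simp [hQ0, isAlgebraic_zero]
  intro i
  set d := Q.natDegree with hd
  set s := Finset.range (d + 1) with hs
  have hinj : Set.InjOn (fun j : ℕ => (j : ℂ)) s := fun a _ b _ h => Nat.cast_injective h
  have hdeg : Q.degree < s.card := by
    rw [hs, Finset.card_range]
    exact lt_of_le_of_lt (Polynomial.degree_le_natDegree)
      (by exact_mod_cast Nat.lt_succ_self d)
  have hint := Lagrange.eq_interpolate hinj hdeg
  rw [isAlgebraic_iff_isIntegral]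
  have : Q.coeff i = ∑ j ∈ s, Q.eval ((j : ℕ) : ℂ) *
      (Lagrange.basis s (fun j : ℕ => (j : ℂ)) j).coeff i := by
    conv_lhs => rw [hint, Lagrange.interpolate_apply]
    rw [Polynomial.finset_sum_coeff]
    exact Finset.sum_congr rfl fun j _ => coeff_C_mul _
  rw [this]
  apply IsIntegral.sum
  intro j _
  apply IsIntegral.mul
  · exact isAlgebraic_iff_isIntegral.mp (hv j)
  · rw [← basis_map, Polynomial.coeff_map]
    exact isAlgebraic_iff_isIntegral.mp (isAlgebraic_algebraMap _)

/-- An algebraic entire function mapping algebraic numbers to algebraic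
numbers is a polynomial with algebraic coefficients. -/
theorem algebraic_entire_is_polynomial (f : ℂ → ℂ) (hf : Differentiable ℂ f)
    (halg : ∃ P : MvPolynomial (Fin 2) ℂ, P ≠ 0 ∧
      ∀ z : ℂ, MvPolynomial.eval ![z, f z] P = 0)
    (hQ : ∀ z : ℂ, IsAlgebraic ℚ z → IsAlgebraic ℚ (f z)) :
    ∃ Q : Polynomial ℂ, (∀ i : ℕ, IsAlgebraic ℚ (Q.coeff i)) ∧
      ∀ z : ℂ, f z = Q.eval z := by
  obtain ⟨m, C, R₀, hC, hR₀, hg⟩ := growth_of_algebraic f halg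
  obtain ⟨Q, hQeq⟩ := entire_eq_poly f hf m (deriv_vanish f hf m C R₀ hC hR₀ hg)
  refine ⟨Q, coeffs_algebraic Q fun n => ?_, hQeq⟩
  rw [← hQeq]
  exact hQ _ (by simpa using isAlgebraic_algebraMap (R := ℚ) (n : ℚ))
end

section
/- The set of entire functions f : ℂ → ℂ which are algebraic (i.e. there exists a nonzero polynomial P ∈ ℂ[X,Y] with P(z, f(z)) = 0 for all z ∈ ℂ) and satisfy f(Q̄) ⊆ Q̄ is countable. -/
open Polynomial

lemma poly_upper (p : ℂ[X]) (N : ℕ) (hN : p.natDegree ≤ N) :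
    ∃ C : ℝ, 0 ≤ C ∧ ∀ z : ℂ, 1 ≤ ‖z‖ → ‖p.eval z‖ ≤ C * ‖z‖ ^ N := by
  refine ⟨∑ j ∈ Finset.range (p.natDegree + 1), ‖p.coeff j‖,
    Finset.sum_nonneg fun _ _ => norm_nonneg _, fun z hz => ?_⟩
  rw [Polynomial.eval_eq_sum_range]
  calc ‖∑ j ∈ Finset.range (p.natDegree + 1), p.coeff j * z ^ j‖
      ≤ ∑ j ∈ Finset.range (p.natDegree + 1), ‖p.coeff j * z ^ j‖ := norm_sum_le _ _
    _ ≤ ∑ j ∈ Finset.range (p.natDegree + 1), ‖p.coeff j‖ * ‖z‖ ^ N := by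
        refine Finset.sum_le_sum fun j hj => ?_
        rw [norm_mul, norm_pow]
        refine mul_le_mul_of_nonneg_left (pow_le_pow_right₀ hz ?_) (norm_nonneg _)
        exact le_trans (Finset.mem_range_succ_iff.mp hj) hN
    _ = (∑ j ∈ Finset.range (p.natDegree + 1), ‖p.coeff j‖) * ‖z‖ ^ N := by
        rw [← Finset.sum_mul]

lemma poly_lower_s11 (p : ℂ[X]) (hp : p ≠ 0) :
    ∃ r : ℝ, 1 ≤ r ∧ ∀ z : ℂ, r ≤ ‖z‖ → ‖p.leadingCoeff‖ ≤ ‖p.eval z‖ := by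
  have hlc : 0 < ‖p.leadingCoeff‖ := by
    simpa using (Polynomial.leadingCoeff_ne_zero.mpr hp)
  rcases Nat.eq_zero_or_pos p.natDegree with h0 | hpos
  · refine ⟨1, le_refl _, fun z hz => ?_⟩
    rw [Polynomial.eq_C_of_natDegree_eq_zero h0]
    simp [Polynomial.leadingCoeff, h0]
  · set n := p.natDegree with hn
    set q := p.eraseLead with hq
    obtain ⟨Cq, hCq0, hCq⟩ := poly_upper q (n - 1)
      (le_trans (Polynomial.eraseLead_natDegree_le p) (le_refl _))
    set L := ‖p.leadingCoeff‖ with hL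
    refine ⟨max 1 ((Cq + L) / L), le_max_left _ _, fun z hz => ?_⟩
    have hz1 : 1 ≤ ‖z‖ := le_trans (le_max_left _ _) hz
    have hz2 : (Cq + L) / L ≤ ‖z‖ := le_trans (le_max_right _ _) hz
    have hzL : Cq + L ≤ L * ‖z‖ := by
      rw [div_le_iff₀ hlc] at hz2; linarith [hz2]
    have hq_bound : ‖q.eval z‖ ≤ Cq * ‖z‖ ^ (n - 1) := hCq z hz1
    have key : p.eval z = q.eval z + p.leadingCoeff * z ^ n := by
      conv_lhs => rw [← Polynomial.eraseLead_add_C_mul_X_pow p]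
      rw [Polynomial.eval_add, Polynomial.eval_mul, Polynomial.eval_C, Polynomial.eval_pow,
        Polynomial.eval_X]
    have hzpow : (1:ℝ) ≤ ‖z‖ ^ (n - 1) := one_le_pow₀ hz1
    have hpow : ‖z‖ ^ n = ‖z‖ * ‖z‖ ^ (n - 1) := by
      rw [← pow_succ']
      congr 1
      omega
    have h1 : ‖p.leadingCoeff * z ^ n‖ - ‖q.eval z‖ ≤ ‖p.eval z‖ := by
      rw [key]
      have := norm_sub_norm_le (p.leadingCoeff * z ^ n) (-(q.eval z))
      simpa [sub_neg_eq_add, add_comm] using this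
    have h2 : L * ‖z‖ ^ n - Cq * ‖z‖ ^ (n - 1) ≤ ‖p.eval z‖ := by
      refine le_trans ?_ h1
      rw [norm_mul, norm_pow]
      linarith [hq_bound]
    have h3 : L ≤ L * ‖z‖ ^ n - Cq * ‖z‖ ^ (n - 1) := by
      rw [hpow, ← mul_assoc]
      have : L * 1 ≤ (L * ‖z‖ - Cq) * ‖z‖ ^ (n - 1) := by
        refine mul_le_mul (by linarith) hzpow zero_le_one (by linarith)
      nlinarith [hzpow, hlc]
    linarith

lemma root_bound_s11 (q : ℂ[X]) (hd : 1 ≤ q.natDegree) {w : ℂ} (hw : q.eval w = 0)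
    (hw1 : 1 ≤ ‖w‖) :
    ‖q.leadingCoeff‖ * ‖w‖ ≤ ∑ j ∈ Finset.range q.natDegree, ‖q.coeff j‖ := by
  set n := q.natDegree with hn
  have heval : q.eval w = ∑ j ∈ Finset.range (n + 1), q.coeff j * w ^ j :=
    Polynomial.eval_eq_sum_range _
  rw [Finset.sum_range_succ] at heval
  have hkey : q.leadingCoeff * w ^ n = -(∑ j ∈ Finset.range n, q.coeff j * w ^ j) := by
    rw [hw] at heval
    rw [Polynomial.leadingCoeff, ← hn]
    linear_combination -heval
  have hnorm : ‖q.leadingCoeff‖ * ‖w‖ ^ n ≤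
      (∑ j ∈ Finset.range n, ‖q.coeff j‖) * ‖w‖ ^ (n - 1) := by
    calc ‖q.leadingCoeff‖ * ‖w‖ ^ n = ‖q.leadingCoeff * w ^ n‖ := by rw [norm_mul, norm_pow]
      _ = ‖∑ j ∈ Finset.range n, q.coeff j * w ^ j‖ := by rw [hkey, norm_neg]
      _ ≤ ∑ j ∈ Finset.range n, ‖q.coeff j * w ^ j‖ := norm_sum_le _ _
      _ ≤ ∑ j ∈ Finset.range n, ‖q.coeff j‖ * ‖w‖ ^ (n - 1) := by
          refine Finset.sum_le_sum fun j hj => ?_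
          rw [norm_mul, norm_pow]
          refine mul_le_mul_of_nonneg_left (pow_le_pow_right₀ hw1 ?_) (norm_nonneg _)
          have := Finset.mem_range.mp hj; omega
      _ = (∑ j ∈ Finset.range n, ‖q.coeff j‖) * ‖w‖ ^ (n - 1) := by rw [← Finset.sum_mul]
  have hpow : ‖w‖ ^ n = ‖w‖ * ‖w‖ ^ (n - 1) := by
    rw [← pow_succ']; congr 1; omega
  have hp : (0:ℝ) < ‖w‖ ^ (n - 1) := by positivity
  rw [hpow, ← mul_assoc] at hnorm
  exact le_of_mul_le_mul_right hnorm hp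

lemma growth_of_rel (g : Polynomial (ℂ[X])) (hg : g ≠ 0) (f : ℂ → ℂ)
    (hrel : ∀ z, Polynomial.eval (f z) (g.map (Polynomial.evalRingHom z)) = 0) :
    ∃ (C : ℝ) (N : ℕ) (r : ℝ), ∀ z, r ≤ ‖z‖ → ‖f z‖ ≤ C * ‖z‖ ^ N := by
  set d := g.natDegree with hd
  rcases Nat.eq_zero_or_pos d with h0 | hpos
  · -- degree 0 case: contradiction
    exfalso
    have hgC : g = Polynomial.C (g.coeff 0) := Polynomial.eq_C_of_natDegree_eq_zero h0
    have hcoeff : g.coeff 0 ≠ 0 := fun h => hg (by rw [hgC, h, map_zero])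
    have hzero : ∀ z : ℂ, (g.coeff 0).eval z = 0 := by
      intro z
      have := hrel z
      rw [hgC] at this
      simpa using this
    have : g.coeff 0 = 0 := by
      apply Polynomial.eq_zero_of_infinite_isRoot
      have : {z : ℂ | (g.coeff 0).IsRoot z} = Set.univ := by
        ext z; simp [Polynomial.IsRoot, hzero z]
      rw [this]
      exact Set.infinite_univ
    exact hcoeff this
  · set a := g.leadingCoeff with ha
    have ha0 : a ≠ 0 := Polynomial.leadingCoeff_ne_zero.mpr hg
    obtain ⟨r₀, hr₀1, hr₀⟩ := poly_lower_s11 a ha0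
    set c := ‖a.leadingCoeff‖ with hc
    have hc0 : 0 < c := by simpa [hc] using Polynomial.leadingCoeff_ne_zero.mpr ha0
    set N := (Finset.range d).sup fun j => (g.coeff j).natDegree with hN
    choose C hC0 hC using fun j : ℕ => poly_upper (g.coeff j) ((g.coeff j).natDegree) le_rfl
    refine ⟨1 + (∑ j ∈ Finset.range d, C j) / c, N, r₀, fun z hz => ?_⟩
    have hz1 : 1 ≤ ‖z‖ := le_trans hr₀1 hz
    have hzN : (1:ℝ) ≤ ‖z‖ ^ N := one_le_pow₀ hz1
    have hSnn : 0 ≤ (∑ j ∈ Finset.range d, C j) / c :=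
      div_nonneg (Finset.sum_nonneg fun j _ => hC0 j) hc0.le
    have hlow : c ≤ ‖a.eval z‖ := hr₀ z hz
    set q := g.map (Polynomial.evalRingHom z) with hqdef
    have hlcq : (Polynomial.evalRingHom z) g.leadingCoeff ≠ 0 := by
      simp only [Polynomial.coe_evalRingHom]
      intro h
      have h2 : ‖Polynomial.eval z a‖ = 0 := by rw [ha, h, norm_zero]
      rw [h2] at hlow
      linarith
    have hqd : q.natDegree = d := Polynomial.natDegree_map_of_leadingCoeff_ne_zero _ hlcq
    have hqlc : q.leadingCoeff = a.eval z := by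
      rw [Polynomial.leadingCoeff, hqd, hqdef, Polynomial.coeff_map]
      rfl
    rcases le_or_gt ‖f z‖ 1 with hf1 | hf1
    · calc ‖f z‖ ≤ 1 := hf1
        _ ≤ (1 + (∑ j ∈ Finset.range d, C j) / c) * ‖z‖ ^ N := by nlinarith
    · have hrb := root_bound_s11 q (by omega) (hrel z) hf1.le
      have hsum : ∑ j ∈ Finset.range q.natDegree, ‖q.coeff j‖ ≤
          (∑ j ∈ Finset.range d, C j) * ‖z‖ ^ N := by
        rw [hqd, Finset.sum_mul]
        refine Finset.sum_le_sum fun j hj => ?_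
        have h1 : ‖q.coeff j‖ = ‖(g.coeff j).eval z‖ := by
          rw [hqdef, Polynomial.coeff_map]; rfl
        rw [h1]
        calc ‖(g.coeff j).eval z‖ ≤ C j * ‖z‖ ^ (g.coeff j).natDegree := hC j z hz1
          _ ≤ C j * ‖z‖ ^ N := by
              refine mul_le_mul_of_nonneg_left (pow_le_pow_right₀ hz1 ?_) (hC0 j)
              exact Finset.le_sup (f := fun j => (Polynomial.natDegree (g.coeff j))) hj
      have hclow : c * ‖f z‖ ≤ (∑ j ∈ Finset.range d, C j) * ‖z‖ ^ N := by
        calc c * ‖f z‖ ≤ ‖q.leadingCoeff‖ * ‖f z‖ := by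
              rw [hqlc]; exact mul_le_mul_of_nonneg_right hlow (norm_nonneg _)
          _ ≤ ∑ j ∈ Finset.range q.natDegree, ‖q.coeff j‖ := hrb
          _ ≤ (∑ j ∈ Finset.range d, C j) * ‖z‖ ^ N := hsum
      have : ‖f z‖ ≤ (∑ j ∈ Finset.range d, C j) / c * ‖z‖ ^ N := by
        rw [div_mul_eq_mul_div, le_div_iff₀ hc0]
        linarith [hclow]
      calc ‖f z‖ ≤ (∑ j ∈ Finset.range d, C j) / c * ‖z‖ ^ N := this
        _ ≤ (1 + (∑ j ∈ Finset.range d, C j) / c) * ‖z‖ ^ N := by nlinarith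

open scoped Real NNReal

lemma poly_of_growth {f : ℂ → ℂ} (hf : Differentiable ℂ f) (C r : ℝ) (n : ℕ)
    (hb : ∀ z : ℂ, r ≤ ‖z‖ → ‖f z‖ ≤ C * ‖z‖ ^ n) :
    ∃ p : ℂ[X], p.natDegree ≤ n ∧ ∀ z, f z = p.eval z := by
  have hF : HasFPowerSeriesOnBall f (cauchyPowerSeries f 0 ((1:ℝ≥0):ℝ)) 0 ⊤ :=
    hf.hasFPowerSeriesOnBall 0 one_pos
  set F := cauchyPowerSeries f 0 ((1:ℝ≥0):ℝ) with hFdef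
  have hC0 : 0 ≤ C := by
    set z0 : ℂ := ((max r 1 : ℝ) : ℂ) with hz0
    have hz0n : ‖z0‖ = max r 1 := by
      rw [hz0, Complex.norm_real, Real.norm_eq_abs, abs_of_pos]
      exact lt_of_lt_of_le zero_lt_one (le_max_right r 1)
    have h1 := hb z0 (by rw [hz0n]; exact le_max_left r 1)
    have h2 : (0:ℝ) < ‖z0‖ ^ n := by
      rw [hz0n]; positivity
    nlinarith [norm_nonneg (f z0)]
  -- coefficient bound
  have hcb : ∀ (R : ℝ≥0), max r 1 ≤ (R:ℝ) → ∀ k, ‖F k‖ ≤ C * (R:ℝ) ^ n * ((R:ℝ)⁻¹) ^ k := by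
    intro R hR k
    have hRpos : 0 < R := by
      have : (0:ℝ) < (R:ℝ) := lt_of_lt_of_le (lt_of_lt_of_le zero_lt_one (le_max_right r 1)) hR
      exact_mod_cast this
    have huniq : F = cauchyPowerSeries f 0 R :=
      hF.hasFPowerSeriesAt.eq_formalMultilinearSeries
        (hf.hasFPowerSeriesOnBall 0 hRpos).hasFPowerSeriesAt
    rw [huniq]
    refine le_trans (norm_cauchyPowerSeries_le f 0 R k) ?_
    have habs : |(R:ℝ)| = (R:ℝ) := abs_of_nonneg R.coe_nonneg
    rw [habs]
    refine mul_le_mul_of_nonneg_right ?_ (by positivity)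
    have hint : (∫ θ : ℝ in (0)..2 * π, ‖f (circleMap 0 R θ)‖) ≤
        ∫ _ : ℝ in (0)..2 * π, C * (R:ℝ) ^ n := by
      refine intervalIntegral.integral_mono_on Real.two_pi_pos.le ?_ ?_ ?_
      · exact ((hf.continuous.comp (continuous_circleMap 0 R)).norm).intervalIntegrable _ _
      · exact intervalIntegrable_const
      · intro θ _
        have h3 : ‖circleMap 0 (R:ℝ) θ‖ = (R:ℝ) := by
          rw [norm_circleMap_zero, habs]
        have h4 := hb (circleMap 0 (R:ℝ) θ) (by rw [h3]; exact le_trans (le_max_left r 1) hR)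
        rwa [h3] at h4
    rw [intervalIntegral.integral_const, smul_eq_mul, sub_zero] at hint
    calc (2 * π)⁻¹ * ∫ θ : ℝ in (0)..2 * π, ‖f (circleMap 0 R θ)‖
        ≤ (2 * π)⁻¹ * (2 * π * (C * (R:ℝ) ^ n)) := by
          refine mul_le_mul_of_nonneg_left hint (by positivity)
      _ = C * (R:ℝ) ^ n := by
          field_simp
  -- vanishing of high coefficients
  have hvanish : ∀ k, n < k → F k = 0 := by
    intro k hk
    have hle : ∀ R : ℝ, max r 1 ≤ R → ‖F k‖ ≤ C / R := by
      intro R hR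
      have hR1 : (1:ℝ) ≤ R := le_trans (le_max_right r 1) hR
      have hRpos : (0:ℝ) < R := lt_of_lt_of_le zero_lt_one hR1
      have hbd := hcb R.toNNReal (by rwa [Real.coe_toNNReal _ hRpos.le]) k
      rw [Real.coe_toNNReal _ hRpos.le] at hbd
      refine le_trans hbd ?_
      have h1 : R ^ n ≤ R ^ (k-1) := pow_le_pow_right₀ hR1 (by omega)
      have hRk1 : (0:ℝ) < R ^ (k-1) := by positivity
      have key : R ^ n * (R⁻¹) ^ k ≤ R⁻¹ := by
        have e : R ^ k = R ^ (k-1) * R := by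
          rw [← pow_succ]; congr 1; omega
        calc R ^ n * (R⁻¹) ^ k = R ^ n * (R ^ (k-1))⁻¹ * R⁻¹ := by
              rw [inv_pow, e, mul_inv, ← mul_assoc]
          _ ≤ 1 * R⁻¹ := by
              refine mul_le_mul_of_nonneg_right ?_ (by positivity)
              rw [← div_eq_mul_inv, div_le_one hRk1]
              exact h1
          _ = R⁻¹ := one_mul _
      calc C * R ^ n * (R⁻¹) ^ k = C * (R ^ n * (R⁻¹) ^ k) := by ring
        _ ≤ C * R⁻¹ := mul_le_mul_of_nonneg_left key hC0
        _ = C / R := by rw [div_eq_mul_inv]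
    have htend : Filter.Tendsto (fun R : ℝ => C / R) Filter.atTop (nhds 0) :=
      Filter.Tendsto.div_atTop tendsto_const_nhds Filter.tendsto_id
    have hev : ∀ᶠ R in Filter.atTop, ‖F k‖ ≤ C / R :=
      Filter.eventually_atTop.mpr ⟨max r 1, hle⟩
    have h0 : ‖F k‖ ≤ 0 := ge_of_tendsto htend hev
    exact norm_le_zero_iff.mp h0
  -- build the polynomial
  refine ⟨∑ k ∈ Finset.range (n+1), Polynomial.C (F.coeff k) * Polynomial.X ^ k, ?_, ?_⟩
  · refine Polynomial.natDegree_sum_le_of_forall_le _ _ fun k hk => ?_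
    exact le_trans (Polynomial.natDegree_C_mul_X_pow_le _ _) (Finset.mem_range_succ_iff.mp hk)
  · intro z
    have hz : z ∈ Metric.eball (0:ℂ) ⊤ := by simp [Metric.eball_top]
    have hsum := hF.hasSum hz
    rw [zero_add] at hsum
    have heq : ∀ k, (F k fun _ => z) = F.coeff k * z ^ k := by
      intro k
      rw [F.apply_eq_pow_smul_coeff, smul_eq_mul]; ring
    simp only [heq] at hsum
    have hfin : HasSum (fun k => F.coeff k * z ^ k)
        (∑ k ∈ Finset.range (n+1), F.coeff k * z ^ k) := by
      refine hasSum_sum_of_ne_finset_zero fun k hk => ?_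
      have hk' : n < k := by
        by_contra h
        exact hk (Finset.mem_range_succ_iff.mpr (not_lt.mp h))
      have : F k = 0 := hvanish k hk'
      simp [FormalMultilinearSeries.coeff, this]
    rw [hsum.unique hfin, Polynomial.eval_finset_sum]
    simp




lemma exists_bivariate (P : MvPolynomial (Fin 2) ℂ) (hP : P ≠ 0) (f : ℂ → ℂ)
    (hrel : ∀ z, MvPolynomial.eval ![z, f z] P = 0) :
    ∃ g : Polynomial (ℂ[X]), g ≠ 0 ∧
      ∀ z, Polynomial.eval (f z) (g.map (Polynomial.evalRingHom z)) = 0 := by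
  set P' := MvPolynomial.rename (Equiv.swap (0:Fin 2) 1) P with hP'def
  have hP' : P' ≠ 0 := fun h =>
    hP (MvPolynomial.rename_injective _ (Equiv.injective _) (by simpa using h))
  set Q := MvPolynomial.finSuccEquiv ℂ 1 P' with hQdef
  have hQ : Q ≠ 0 := fun h => hP' ((MvPolynomial.finSuccEquiv ℂ 1).injective
    (by rw [← hQdef, h, map_zero]))
  set ψ : MvPolynomial (Fin 1) ℂ →+* ℂ[X] :=
    MvPolynomial.eval₂Hom Polynomial.C (fun _ => Polynomial.X) with hψdef
  have hcomp : ∀ z : ℂ, (Polynomial.evalRingHom z).comp ψ =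
      (MvPolynomial.eval (fun _ : Fin 1 => z) : MvPolynomial (Fin 1) ℂ →+* ℂ) := by
    intro z
    apply MvPolynomial.ringHom_ext
    · intro c; simp [hψdef]
    · intro i; simp [hψdef]
  have hψkey : ∀ (c : MvPolynomial (Fin 1) ℂ) (z : ℂ),
      Polynomial.eval z (ψ c) = MvPolynomial.eval (fun _ : Fin 1 => z) c := by
    intro c z
    have := RingHom.congr_fun (hcomp z) c
    simpa using this
  have hψinj : Function.Injective ψ := by
    intro a b hab
    apply MvPolynomial.funext
    intro x
    have hx : x = fun _ => x 0 := funext fun i => by rw [Subsingleton.elim i 0]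
    rw [hx, ← hψkey, ← hψkey, hab]
  refine ⟨Q.map ψ, fun h => hQ (Polynomial.map_injective ψ hψinj (by simpa using h)), ?_⟩
  intro z
  rw [Polynomial.map_map, hcomp z]
  have heval := MvPolynomial.eval_eq_eval_mv_eval' (fun _ : Fin 1 => z) (f z) P'
  rw [← hQdef] at heval
  rw [← heval, hP'def, MvPolynomial.eval_rename]
  have harg : ((Fin.cons (f z) fun _ : Fin 1 => z) ∘ (Equiv.swap (0:Fin 2) 1)) = ![z, f z] := by
    funext i
    fin_cases i <;> simp [Equiv.swap_apply_left, Equiv.swap_apply_right]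
  rw [harg]
  exact hrel z

theorem countable_algebraic_entire_functions' :
    Set.Countable {f : ℂ → ℂ |
      Differentiable ℂ f ∧
      (∃ P : MvPolynomial (Fin 2) ℂ, P ≠ 0 ∧
        ∀ z : ℂ, MvPolynomial.eval ![z, f z] P = 0) ∧
      (∀ z : ℂ, IsAlgebraic ℚ z → IsAlgebraic ℚ (f z))} := by
  set T : ℕ → Set (ℂ → ℂ) := fun n =>
    {f : ℂ → ℂ | (∃ p : ℂ[X], p.natDegree ≤ n ∧ ∀ z, f z = p.eval z) ∧
      ∀ i : Fin (n+1), IsAlgebraic ℚ (f ((i : ℕ) : ℂ))} with hT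
  have hsub : {f : ℂ → ℂ |
      Differentiable ℂ f ∧
      (∃ P : MvPolynomial (Fin 2) ℂ, P ≠ 0 ∧
        ∀ z : ℂ, MvPolynomial.eval ![z, f z] P = 0) ∧
      (∀ z : ℂ, IsAlgebraic ℚ z → IsAlgebraic ℚ (f z))} ⊆ ⋃ n, T n := by
    rintro f ⟨hdiff, ⟨P, hP, hrelP⟩, halg⟩
    obtain ⟨g, hg, hrelg⟩ := exists_bivariate P hP f hrelP
    obtain ⟨C, N, r, hgrowth⟩ := growth_of_rel g hg f hrelg
    obtain ⟨p, hpdeg, hpeval⟩ := poly_of_growth hdiff C r N hgrowth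
    refine Set.mem_iUnion.mpr ⟨N, ⟨⟨p, hpdeg, hpeval⟩, fun i => halg _ (isAlgebraic_nat _)⟩⟩
  refine Set.Countable.mono hsub (Set.countable_iUnion fun n => ?_)
  have hinj : Set.InjOn (fun (f : ℂ → ℂ) => fun i : Fin (n+1) => f ((i : ℕ) : ℂ)) (T n) := by
    rintro f ⟨⟨p, hpdeg, hpeval⟩, -⟩ g ⟨⟨q, hqdeg, hqeval⟩, -⟩ hfg
    have hpq : p = q := by
      set s : Finset ℂ := (Finset.range (n+1)).image (fun k : ℕ => (k : ℂ)) with hs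
      have hcard : s.card = n + 1 := by
        rw [hs, Finset.card_image_of_injective _ Nat.cast_injective, Finset.card_range]
      have hdeg : ∀ m : ℕ, m ≤ n → ∀ h : ℂ[X], h.natDegree ≤ m → h.degree < s.card := by
        intro m hm h hh
        refine lt_of_le_of_lt h.degree_le_natDegree ?_
        rw [hcard]
        exact_mod_cast lt_of_le_of_lt (le_trans hh hm) (Nat.lt_succ_self n)
      refine Polynomial.eq_of_degrees_lt_of_eval_finset_eq s
        (hdeg n le_rfl p hpdeg) (hdeg n le_rfl q hqdeg) ?_
      intro x hx
      rw [hs] at hx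
      obtain ⟨k, hk, rfl⟩ := Finset.mem_image.mp hx
      rw [Finset.mem_range] at hk
      have := congr_fun hfg (⟨k, hk⟩ : Fin (n+1))
      simp only at this
      rw [← hpeval, ← hqeval]
      exact this
    funext z
    rw [hpeval z, hqeval z, hpq]
  have hmaps : Set.MapsTo (fun (f : ℂ → ℂ) => fun i : Fin (n+1) => f ((i : ℕ) : ℂ)) (T n)
      {g : Fin (n+1) → ℂ | ∀ i, g i ∈ {z : ℂ | IsAlgebraic ℚ z}} := by
    rintro f ⟨-, halg⟩ i
    exact halg i
  exact hmaps.countable_of_injOn hinj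
    (Set.countable_pi (fun _ : Fin (n+1) => Algebraic.countable ℚ ℂ))

/-- The set of algebraic entire functions mapping the algebraic numbers
into themselves is countable. -/
theorem countable_algebraic_entire_functions :
    Set.Countable {f : ℂ → ℂ |
      Differentiable ℂ f ∧
      (∃ P : MvPolynomial (Fin 2) ℂ, P ≠ 0 ∧
        ∀ z : ℂ, MvPolynomial.eval ![z, f z] P = 0) ∧
      (∀ z : ℂ, IsAlgebraic ℚ z → IsAlgebraic ℚ (f z))} := by
  exact countable_algebraic_entire_functions'
end
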